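/- Let q ≥ 2 be an integer, b = q(q+1), v = q², v₀ = q(q−1)/2. Let Z be a b×v matrix with entries in {0,1} satisfying Z·1 = q·1 and ZᵀZ = q·I + J (an affine plane of order q), and suppose Z(i,j) = 0 whenever j ≤ v₀ and i > q² − 1. For each j = 1,…,v let E_j be a b×(q+1) complex matrix with entries in {0,1} such that E_jᵀE_j = I and (E_j·1)(i) = Z(i,j) for every i (an embedding for column j); for j > v₀ assume additionally E_j(i,l) = 0 whenever either (i > q² − 1 and l ≤ q − 1) or (i ≤ q² − 1 and l ≥ q). Let s_1,…,s_{q+2} ∈ ℂ^{q+1} satisfy |s_l(i)| = 1 for all i, l and |⟨s_l, s_{l′}⟩| = 1 for all l ≠ l′ (a unimodular simplex), and let c_1,…,c_q ∈ ℂ^{q+1} satisfy |c_l(i)| = 1 for all i, l, c_l(q) + c_l(q+1) = 0 for all l, and |⟨c_l, c_{l′}⟩| = 1 for all l ≠ l′ (a unimodular cosimplex). Consider the family of q(q²+q−1) vectors in ℂ^b consisting of E_j s_l for 1 ≤ j ≤ v₀, 1 ≤ l ≤ q+2, together with E_j c_l for v₀ < j ≤ v, 1 ≤ l ≤ q. Then: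 every vector of the family lies in the subspace H = { x ∈ ℂ^b : x(q²) + x(q²+1) + ⋯ + x(q²+q) = 0 } (which has dimension q² + q − 1); every vector has squared norm q+1; any two distinct vectors of the family have inner product of modulus 1; and the sum of the rank-one outer products of these vectors equals q(q+1)·Π, where Π is the orthogonal projection of ℂ^b onto H. Hence the family is an equiangular tight frame of q(q²+q−1) vectors for the (q²+q−1)-dimensional subspace H. -/

import Mathlib

open Matrix

open Finset in
open scoped ComplexConjugate in
private lemma etf_boole_sum {ι : Type*} {t : Finset ι} {f : ι → ℂ}
    (h : ∀ i ∈ t, f i = 0 ∨ f i = 1) :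
    ∑ i ∈ t, f i = ((t.filter (fun i => f i = 1)).card : ℂ) := by
  rw [Finset.card_filter, Nat.cast_sum]
  refine Finset.sum_congr rfl fun i hi => ?_
  rcases h i hi with h' | h' <;> simp [h']

open Finset in
open scoped ComplexConjugate in
private lemma etf_boole_sum_eq_zero {ι : Type*} {t : Finset ι} {f : ι → ℂ}
    (h : ∀ i ∈ t, f i = 0 ∨ f i = 1) (h0 : ∑ i ∈ t, f i = 0) :
    ∀ i ∈ t, f i = 0 := by
  rw [etf_boole_sum h] at h0
  have hc : (t.filter (fun i => f i = 1)).card = 0 := by exact_mod_cast h0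
  intro i hi
  rcases h i hi with h' | h'
  · exact h'
  · exfalso
    have : i ∈ t.filter (fun i => f i = 1) := Finset.mem_filter.2 ⟨hi, h'⟩
    simp [Finset.card_eq_zero.1 hc] at this

open Finset in
open scoped ComplexConjugate in
private lemma etf_boole_sum_eq_one {ι : Type*} {t : Finset ι} {f : ι → ℂ}
    (h : ∀ i ∈ t, f i = 0 ∨ f i = 1) (h1 : ∑ i ∈ t, f i = 1) :
    ∃ i0 ∈ t, f i0 = 1 ∧ ∀ i ∈ t, i ≠ i0 → f i = 0 := by
  rw [etf_boole_sum h] at h1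
  have hc : (t.filter (fun i => f i = 1)).card = 1 := by exact_mod_cast h1
  obtain ⟨i0, hi0⟩ := Finset.card_eq_one.1 hc
  have hmem : i0 ∈ t.filter (fun i => f i = 1) := by simp [hi0]
  refine ⟨i0, (Finset.mem_filter.1 hmem).1, (Finset.mem_filter.1 hmem).2, ?_⟩
  intro i hi hne
  rcases h i hi with h' | h'
  · exact h'
  · exfalso
    have : i ∈ t.filter (fun i => f i = 1) := Finset.mem_filter.2 ⟨hi, h'⟩
    rw [hi0] at this
    exact hne (Finset.mem_singleton.1 this)

open Finset in
open scoped ComplexConjugate in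
private lemma etf_sum_mul_conj_eq_zero {ι : Type*} {t : Finset ι} {f : ι → ℂ}
    (h : ∑ i ∈ t, f i * conj (f i) = 0) : ∀ i ∈ t, f i = 0 := by
  have h' : ∑ i ∈ t, (Complex.normSq (f i) : ℂ) = 0 := by
    rw [← h]; exact Finset.sum_congr rfl fun i _ => (Complex.mul_conj (f i)).symm
  have h'' : ∑ i ∈ t, Complex.normSq (f i) = 0 := by exact_mod_cast h'
  intro i hi
  have := (Finset.sum_eq_zero_iff_of_nonneg (fun j _ => Complex.normSq_nonneg (f j))).1 h'' i hi
  exact Complex.normSq_eq_zero.1 this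

open Finset in
open scoped ComplexConjugate in
private lemma etf_trace_form {n : Type*} [Fintype n] (M : Matrix n n ℂ) :
    ∑ m, ∑ m', M m m' * conj (M m m') = (M * Mᴴ).trace := by
  simp [Matrix.trace, Matrix.mul_apply, Matrix.conjTranspose_apply, Matrix.diag, mul_comm]

open Finset in
open scoped ComplexConjugate in
private lemma etf_gram_flip {n k : Type*} [Fintype n] [Fintype k] (A : Matrix n k ℂ) :
    ∑ m, ∑ m', (A * Aᴴ) m m' * conj ((A * Aᴴ) m m')
      = ∑ l, ∑ l', (Aᴴ * A) l l' * conj ((Aᴴ * A) l l') := by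
  rw [etf_trace_form, etf_trace_form]
  rw [Matrix.conjTranspose_mul, Matrix.conjTranspose_conjTranspose,
    Matrix.conjTranspose_mul, Matrix.conjTranspose_conjTranspose]
  calc (A * Aᴴ * (A * Aᴴ)).trace = (A * (Aᴴ * A * Aᴴ)).trace := by
        simp only [Matrix.mul_assoc]
    _ = ((Aᴴ * A * Aᴴ) * A).trace := Matrix.trace_mul_comm _ _
    _ = (Aᴴ * A * (Aᴴ * A)).trace := by simp only [Matrix.mul_assoc]

open scoped ComplexConjugate in
private lemma etf_unimod_mul_conj {z : ℂ} (hz : ‖z‖ = 1) : z * conj z = 1 := by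
  rw [Complex.mul_conj]; norm_cast; rw [Complex.normSq_eq_norm_sq, hz, one_pow]

open scoped ComplexConjugate in
private lemma etf_unimod_conj_mul {z : ℂ} (hz : ‖z‖ = 1) : conj z * z = 1 := by
  rw [mul_comm]; exact etf_unimod_mul_conj hz

open Finset in
private lemma etf_pair_sum {n : ℕ} (f : Fin n → Fin n → ℂ) (a b : Fin n) (z : ℂ) :
    ∑ m, ∑ m', f m m' * (if m = a ∧ m' = b then z else 0) = f a b * z := by
  have inner : ∀ m, ∑ m', f m m' * (if m = a ∧ m' = b then z else 0)
      = if m = a then f m b * z else 0 := by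
    intro m
    by_cases h : m = a
    · simp only [h, true_and, if_pos]
      have h2 : ∀ m', f a m' * (if m' = b then z else 0) = if m' = b then f a m' * z else 0 := by
        intro m'; by_cases hb : m' = b <;> simp [hb]
      rw [Finset.sum_congr rfl fun m' _ => h2 m']
      rw [Finset.sum_ite_eq' univ b fun m' => f a m' * z]
      simp [h]
    · simp [h]
  rw [Finset.sum_congr rfl fun m _ => inner m]
  rw [Finset.sum_ite_eq' univ a fun m => f m b * z]
  simp

open Finset in
private lemma etf_diag_sum {n : ℕ} (f : Fin n → Fin n → ℂ) (z : ℂ) :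
    ∑ m, ∑ m', f m m' * (if m = m' then z else 0) = ∑ m, f m m * z := by
  refine Finset.sum_congr rfl fun m _ => ?_
  have h2 : ∀ m', f m m' * (if m = m' then z else 0) = if m' = m then f m m' * z else 0 := by
    intro m'
    by_cases h : m' = m
    · simp [h]
    · rw [if_neg (fun hh => h hh.symm), if_neg h, mul_zero]
  rw [Finset.sum_congr rfl fun m' _ => h2 m']
  rw [Finset.sum_ite_eq' univ m fun m' => f m m' * z]
  simp

open Finset in
private lemma etf_fin_filter_le_card (a n : ℕ) :
    (Finset.univ.filter (fun i : Fin n => a ≤ (i : ℕ))).card = n - a := by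
  have h1 : ((Finset.range n).filter (fun i => a ≤ i)).card = n - a := by
    have : (Finset.range n).filter (fun i => a ≤ i) = Finset.Ico a n := by
      ext i; simp [Finset.mem_filter, Finset.mem_range, Finset.mem_Ico]; omega
    rw [this, Nat.card_Ico]
  rw [← h1]
  apply Finset.card_bij (fun (i : Fin n) _ => (i : ℕ))
  · intro i hi; simp at hi ⊢; exact hi
  · intro i hi j hj hij; exact Fin.ext hij
  · intro i hi
    simp only [Finset.mem_filter, Finset.mem_range] at hi
    exact ⟨⟨i, hi.1⟩, by simp [hi.2], rfl⟩

open Finset in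
private lemma etf_fin_filter_lt_card (a n : ℕ) :
    (Finset.univ.filter (fun i : Fin n => (i : ℕ) < a)).card = min a n := by
  have h1 : ((Finset.range n).filter (fun i => i < a)).card = min a n := by
    have : (Finset.range n).filter (fun i => i < a) = Finset.range (min a n) := by
      ext i; simp [Finset.mem_filter, Finset.mem_range]; omega
    rw [this, Finset.card_range]
  rw [← h1]
  apply Finset.card_bij (fun (i : Fin n) _ => (i : ℕ))
  · intro i hi; simp at hi ⊢; exact hi
  · intro i hi j hj hij; exact Fin.ext hij
  · intro i hi
    simp only [Finset.mem_filter, Finset.mem_range] at hi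
    exact ⟨⟨i, hi.1⟩, by simp [hi.2], rfl⟩


open Finset in
open scoped ComplexConjugate in
private lemma etf_simplex_gram (q : ℕ) (hq : 2 ≤ q)
    (s : Fin (q + 2) → Fin (q + 1) → ℂ)
    (hs_unimod : ∀ l i, ‖s l i‖ = 1)
    (hs_ang : ∀ l l', l ≠ l' → ‖star (s l) ⬝ᵥ s l'‖ = 1) :
    ∀ m m', (∑ l : Fin (q+2), s l m * conj (s l m')) = if m = m' then (q:ℂ)+2 else 0 := by
  set A : Matrix (Fin (q+1)) (Fin (q+2)) ℂ := Matrix.of fun m l => s l m with hA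
  have hS : ∀ m m', (A * Aᴴ) m m' = ∑ l, s l m * conj (s l m') := by
    intro m m'; simp [Matrix.mul_apply, Matrix.conjTranspose_apply, hA]
  have hG : ∀ l l', (Aᴴ * A) l l' = star (s l) ⬝ᵥ s l' := by
    intro l l'; simp [Matrix.mul_apply, Matrix.conjTranspose_apply, hA, dotProduct]
  have hGdiag : ∀ l, (Aᴴ * A) l l = (q:ℂ)+1 := by
    intro l
    rw [hG]
    have : star (s l) ⬝ᵥ s l = ∑ m : Fin (q+1), conj (s l m) * (s l m) := rfl
    rw [this]
    rw [Finset.sum_congr rfl fun m _ => etf_unimod_conj_mul (hs_unimod l m)]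
    simp
  have hSdiag : ∀ m, (A * Aᴴ) m m = (q:ℂ)+2 := by
    intro m
    rw [hS]
    rw [Finset.sum_congr rfl fun l _ => etf_unimod_mul_conj (hs_unimod l m)]
    simp
  -- T matrix
  set T : Matrix (Fin (q+1)) (Fin (q+1)) ℂ := Matrix.of fun m m' => if m = m' then (q:ℂ)+2 else 0 with hT
  -- t1
  have t1 : ∑ m, ∑ m', (A * Aᴴ) m m' * conj ((A * Aᴴ) m m')
      = ((q:ℂ)+2) * (((q:ℂ)+1)^2 + ((q:ℂ)+1)) := by
    rw [etf_gram_flip]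
    have inner : ∀ l : Fin (q+2), ∑ l', (Aᴴ*A) l l' * conj ((Aᴴ*A) l l')
        = ((q:ℂ)+1)^2 + ((q:ℂ)+1) := by
      intro l
      rw [← Finset.add_sum_erase _ _ (Finset.mem_univ l)]
      congr 1
      · rw [hGdiag]
        have : conj ((q:ℂ)+1) = (q:ℂ)+1 := by simp
        rw [this]; ring
      · have : ∀ l' ∈ univ.erase l, (Aᴴ*A) l l' * conj ((Aᴴ*A) l l') = 1 := by
          intro l' hl'
          have hne : l ≠ l' := (Finset.ne_of_mem_erase hl').symm
          rw [hG]
          exact etf_unimod_mul_conj (hs_ang l l' hne)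
        rw [Finset.sum_congr rfl this, Finset.sum_const, Finset.card_erase_of_mem (Finset.mem_univ l)]
        simp
    rw [Finset.sum_congr rfl fun l _ => inner l, Finset.sum_const]
    simp only [Finset.card_univ, Fintype.card_fin, nsmul_eq_mul]
    push_cast
    ring
  -- t2, t3, t4
  have hconjT : ∀ m m', conj (T m m') = T m m' := by
    intro m m'; by_cases h : m = m' <;> simp [hT, h, Complex.conj_ofNat]
  have t2 : ∑ m, ∑ m', (A * Aᴴ) m m' * conj (T m m') = ((q:ℂ)+1) * (((q:ℂ)+2)*((q:ℂ)+2)) := by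
    have inner : ∀ m, ∑ m', (A * Aᴴ) m m' * conj (T m m') = ((q:ℂ)+2)*((q:ℂ)+2) := by
      intro m
      have h' : ∀ m', (A*Aᴴ) m m' * conj (T m m')
          = if m = m' then (A*Aᴴ) m m' * ((q:ℂ)+2) else 0 := by
        intro m'; rw [hconjT]; by_cases h : m = m' <;> simp [hT, h, Complex.conj_ofNat]
      rw [Finset.sum_congr rfl fun m' _ => h' m']
      rw [Finset.sum_ite_eq univ m fun m' => (A*Aᴴ) m m' * ((q:ℂ)+2)]
      simp [hSdiag, Complex.conj_ofNat]
    rw [Finset.sum_congr rfl fun m _ => inner m, Finset.sum_const]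
    simp only [Finset.card_univ, Fintype.card_fin, nsmul_eq_mul]
    push_cast
    ring
  have t3 : ∑ m, ∑ m', T m m' * conj ((A * Aᴴ) m m') = ((q:ℂ)+1) * (((q:ℂ)+2)*((q:ℂ)+2)) := by
    have inner : ∀ m, ∑ m', T m m' * conj ((A * Aᴴ) m m') = ((q:ℂ)+2)*((q:ℂ)+2) := by
      intro m
      have h' : ∀ m', T m m' * conj ((A*Aᴴ) m m')
          = if m = m' then ((q:ℂ)+2) * conj ((A*Aᴴ) m m') else 0 := by
        intro m'; by_cases h : m = m' <;> simp [hT, h, Complex.conj_ofNat]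
      rw [Finset.sum_congr rfl fun m' _ => h' m']
      rw [Finset.sum_ite_eq univ m fun m' => ((q:ℂ)+2) * conj ((A*Aᴴ) m m')]
      simp [hSdiag, Complex.conj_ofNat]
    rw [Finset.sum_congr rfl fun m _ => inner m, Finset.sum_const]
    simp only [Finset.card_univ, Fintype.card_fin, nsmul_eq_mul]
    push_cast
    ring
  have t4 : ∑ m, ∑ m', T m m' * conj (T m m') = ((q:ℂ)+1) * (((q:ℂ)+2)*((q:ℂ)+2)) := by
    have inner : ∀ m, ∑ m', T m m' * conj (T m m') = ((q:ℂ)+2)*((q:ℂ)+2) := by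
      intro m
      have h' : ∀ m', T m m' * conj (T m m')
          = if m = m' then ((q:ℂ)+2) * ((q:ℂ)+2) else 0 := by
        intro m'; by_cases h : m = m' <;> simp [hT, h, Complex.conj_ofNat]
      rw [Finset.sum_congr rfl fun m' _ => h' m']
      rw [Finset.sum_ite_eq univ m fun _ => ((q:ℂ)+2) * ((q:ℂ)+2)]
      simp
    rw [Finset.sum_congr rfl fun m _ => inner m, Finset.sum_const]
    simp only [Finset.card_univ, Fintype.card_fin, nsmul_eq_mul]
    push_cast
    ring
  have total : ∑ p : Fin (q+1) × Fin (q+1),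
      ((A*Aᴴ) p.1 p.2 - T p.1 p.2) * conj ((A*Aᴴ) p.1 p.2 - T p.1 p.2) = 0 := by
    rw [Fintype.sum_prod_type]
    have expand : ∀ m m', ((A*Aᴴ) m m' - T m m') * conj ((A*Aᴴ) m m' - T m m')
        = ((A*Aᴴ) m m' * conj ((A*Aᴴ) m m') - (A*Aᴴ) m m' * conj (T m m'))
          - (T m m' * conj ((A*Aᴴ) m m') - T m m' * conj (T m m')) := by
      intro m m'; rw [map_sub]; ring
    rw [Finset.sum_congr rfl fun m _ => Finset.sum_congr rfl fun m' _ => expand m m']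
    simp only [Finset.sum_sub_distrib]
    rw [t1, t2, t3, t4]
    ring
  have hzero := etf_sum_mul_conj_eq_zero total
  intro m m'
  have := hzero (m, m') (Finset.mem_univ _)
  have h2 := sub_eq_zero.1 this
  rw [hS] at h2
  rw [h2]
  rfl

open Finset in
open scoped ComplexConjugate in
private lemma etf_cosimplex_gram (q : ℕ) (hq : 2 ≤ q)
    (c : Fin q → Fin (q + 1) → ℂ)
    (hc_unimod : ∀ l i, ‖c l i‖ = 1)
    (hc_sum : ∀ l, c l ⟨q - 1, Nat.sub_lt_succ q 1⟩ + c l ⟨q, Nat.lt_succ_self q⟩ = 0)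
    (hc_ang : ∀ l l', l ≠ l' → ‖star (c l) ⬝ᵥ c l'‖ = 1) :
    ∀ m m', (∑ l : Fin q, c l m * conj (c l m'))
      = (if m = m' then (q:ℂ) else 0)
        + (if m = (⟨q-1, Nat.sub_lt_succ q 1⟩ : Fin (q+1)) ∧ m' = (⟨q, Nat.lt_succ_self q⟩ : Fin (q+1)) then -(q:ℂ) else 0)
        + (if m = (⟨q, Nat.lt_succ_self q⟩ : Fin (q+1)) ∧ m' = (⟨q-1, Nat.sub_lt_succ q 1⟩ : Fin (q+1)) then -(q:ℂ) else 0) := by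
  set lo : Fin (q+1) := ⟨q-1, Nat.sub_lt_succ q 1⟩ with hlo
  set hi : Fin (q+1) := ⟨q, Nat.lt_succ_self q⟩ with hhi
  have hlohi : lo ≠ hi := by
    intro h
    have := congrArg Fin.val h
    simp [hlo, hhi] at this
    omega
  have hchi : ∀ l, c l hi = -c l lo := by
    intro l
    have := hc_sum l
    have h' : c l lo + c l hi = 0 := this
    linear_combination h'
  set A : Matrix (Fin (q+1)) (Fin q) ℂ := Matrix.of fun m l => c l m with hA
  have hS : ∀ m m', (A * Aᴴ) m m' = ∑ l, c l m * conj (c l m') := by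
    intro m m'; simp [Matrix.mul_apply, Matrix.conjTranspose_apply, hA]
  have hG : ∀ l l', (Aᴴ * A) l l' = star (c l) ⬝ᵥ c l' := by
    intro l l'; simp [Matrix.mul_apply, Matrix.conjTranspose_apply, hA, dotProduct]
  have hGdiag : ∀ l, (Aᴴ * A) l l = (q:ℂ)+1 := by
    intro l
    rw [hG]
    have : star (c l) ⬝ᵥ c l = ∑ m : Fin (q+1), conj (c l m) * (c l m) := rfl
    rw [this, Finset.sum_congr rfl fun m _ => etf_unimod_conj_mul (hc_unimod l m)]
    simp
  have hSdiag : ∀ m, (A * Aᴴ) m m = (q:ℂ) := by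
    intro m
    rw [hS, Finset.sum_congr rfl fun l _ => etf_unimod_mul_conj (hc_unimod l m)]
    simp
  have hSlohi : (A * Aᴴ) lo hi = -(q:ℂ) := by
    rw [hS]
    have h' : ∀ l, c l lo * conj (c l hi) = -(c l lo * conj (c l lo)) := by
      intro l; rw [hchi l, map_neg]; ring
    rw [Finset.sum_congr rfl fun l _ => h' l, Finset.sum_neg_distrib]
    rw [Finset.sum_congr rfl fun l _ => etf_unimod_mul_conj (hc_unimod l lo)]
    simp
  have hShilo : (A * Aᴴ) hi lo = -(q:ℂ) := by
    rw [hS]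
    have h' : ∀ l, c l hi * conj (c l lo) = -(c l lo * conj (c l lo)) := by
      intro l; rw [hchi l]; ring
    rw [Finset.sum_congr rfl fun l _ => h' l, Finset.sum_neg_distrib]
    rw [Finset.sum_congr rfl fun l _ => etf_unimod_mul_conj (hc_unimod l lo)]
    simp
  set T : Matrix (Fin (q+1)) (Fin (q+1)) ℂ := Matrix.of fun m m' =>
    (if m = m' then (q:ℂ) else 0) + (if m = lo ∧ m' = hi then -(q:ℂ) else 0)
      + (if m = hi ∧ m' = lo then -(q:ℂ) else 0) with hT
  have hconjT : ∀ m m', conj (T m m') = T m m' := by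
    intro m m'
    simp only [hT, Matrix.of_apply, map_add]
    congr 1
    · congr 1
      · by_cases h : m = m' <;> simp [h]
      · by_cases h : m = lo ∧ m' = hi <;> simp [h]
    · by_cases h : m = hi ∧ m' = lo <;> simp [h]
  -- t1 via etf_gram_flip
  have t1 : ∑ m, ∑ m', (A * Aᴴ) m m' * conj ((A * Aᴴ) m m')
      = (q:ℂ) * (((q:ℂ)+1)^2 + ((q:ℂ)-1)) := by
    rw [etf_gram_flip]
    have inner : ∀ l : Fin q, ∑ l', (Aᴴ*A) l l' * conj ((Aᴴ*A) l l')
        = ((q:ℂ)+1)^2 + ((q:ℂ)-1) := by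
      intro l
      rw [← Finset.add_sum_erase _ _ (Finset.mem_univ l)]
      congr 1
      · rw [hGdiag]
        have : conj ((q:ℂ)+1) = (q:ℂ)+1 := by simp
        rw [this]; ring
      · have h' : ∀ l' ∈ univ.erase l, (Aᴴ*A) l l' * conj ((Aᴴ*A) l l') = 1 := by
          intro l' hl'
          have hne : l ≠ l' := (Finset.ne_of_mem_erase hl').symm
          rw [hG]
          exact etf_unimod_mul_conj (hc_ang l l' hne)
        rw [Finset.sum_congr rfl h', Finset.sum_const,
          Finset.card_erase_of_mem (Finset.mem_univ l)]
        simp only [Finset.card_univ, Fintype.card_fin, nsmul_eq_mul, mul_one]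
        push_cast [Nat.cast_sub (show 1 ≤ q by omega)]
        try ring
    rw [Finset.sum_congr rfl fun l _ => inner l, Finset.sum_const]
    simp only [Finset.card_univ, Fintype.card_fin, nsmul_eq_mul]
    try ring
  -- expansion of sums against T
  have expandT : ∀ (g : Fin (q+1) → Fin (q+1) → ℂ),
      ∑ m, ∑ m', g m m' * T m m'
        = (∑ m, g m m * (q:ℂ)) + g lo hi * (-(q:ℂ)) + g hi lo * (-(q:ℂ)) := by
    intro g
    have h' : ∀ m m', g m m' * T m m'
        = g m m' * (if m = m' then (q:ℂ) else 0)
          + g m m' * (if m = lo ∧ m' = hi then -(q:ℂ) else 0)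
          + g m m' * (if m = hi ∧ m' = lo then -(q:ℂ) else 0) := by
      intro m m'; simp only [hT, Matrix.of_apply]; ring
    rw [Finset.sum_congr rfl fun m _ => Finset.sum_congr rfl fun m' _ => h' m m']
    simp only [Finset.sum_add_distrib]
    rw [etf_diag_sum, etf_pair_sum, etf_pair_sum]
  have t2 : ∑ m, ∑ m', (A * Aᴴ) m m' * conj (T m m')
      = ((q:ℂ)+1) * ((q:ℂ)*(q:ℂ)) + 2*((q:ℂ)*(q:ℂ)) := by
    rw [Finset.sum_congr rfl fun m _ => Finset.sum_congr rfl fun m' _ => by rw [hconjT]]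
    rw [expandT (A * Aᴴ)]
    rw [Finset.sum_congr rfl fun m _ => by rw [hSdiag], Finset.sum_const]
    rw [hSlohi, hShilo]
    simp only [Finset.card_univ, Fintype.card_fin, nsmul_eq_mul]
    push_cast
    ring
  have t3 : ∑ m, ∑ m', T m m' * conj ((A * Aᴴ) m m')
      = ((q:ℂ)+1) * ((q:ℂ)*(q:ℂ)) + 2*((q:ℂ)*(q:ℂ)) := by
    have hsw : ∀ m m', T m m' * conj ((A*Aᴴ) m m') = conj ((A*Aᴴ) m m') * T m m' :=
      fun m m' => mul_comm _ _
    rw [Finset.sum_congr rfl fun m _ => Finset.sum_congr rfl fun m' _ => hsw m m']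
    rw [expandT]
    have e1 : ∀ m : Fin (q+1), conj ((A*Aᴴ) m m) = (q:ℂ) := by
      intro m; rw [hSdiag]; simp
    have e2 : conj ((A*Aᴴ) lo hi) = -(q:ℂ) := by rw [hSlohi]; simp
    have e3 : conj ((A*Aᴴ) hi lo) = -(q:ℂ) := by rw [hShilo]; simp
    rw [Finset.sum_congr rfl fun m _ => by rw [e1 m], Finset.sum_const, e2, e3]
    simp only [Finset.card_univ, Fintype.card_fin, nsmul_eq_mul]
    push_cast
    ring
  have t4 : ∑ m, ∑ m', T m m' * conj (T m m')
      = ((q:ℂ)+1) * ((q:ℂ)*(q:ℂ)) + 2*((q:ℂ)*(q:ℂ)) := by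
    rw [Finset.sum_congr rfl fun m _ => Finset.sum_congr rfl fun m' _ => by rw [hconjT]]
    rw [expandT T]
    have e1 : ∀ m : Fin (q+1), T m m = (q:ℂ) := by
      intro m
      have h2 : ¬(m = lo ∧ m = hi) := fun ⟨h1, h2⟩ => hlohi (h1 ▸ h2 ▸ rfl)
      have h3 : ¬(m = hi ∧ m = lo) := fun ⟨h1, h2⟩ => hlohi (h2 ▸ h1 ▸ rfl)
      simp [hT, h2, h3]
    have e2 : T lo hi = -(q:ℂ) := by simp [hT, hlohi, hlohi.symm]
    have e3 : T hi lo = -(q:ℂ) := by simp [hT, hlohi, hlohi.symm]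
    rw [Finset.sum_congr rfl fun m _ => by rw [e1 m], Finset.sum_const, e2, e3]
    simp only [Finset.card_univ, Fintype.card_fin, nsmul_eq_mul]
    push_cast
    ring
  have total : ∑ p : Fin (q+1) × Fin (q+1),
      ((A*Aᴴ) p.1 p.2 - T p.1 p.2) * conj ((A*Aᴴ) p.1 p.2 - T p.1 p.2) = 0 := by
    rw [Fintype.sum_prod_type]
    have expand : ∀ m m', ((A*Aᴴ) m m' - T m m') * conj ((A*Aᴴ) m m' - T m m')
        = ((A*Aᴴ) m m' * conj ((A*Aᴴ) m m') - (A*Aᴴ) m m' * conj (T m m'))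
          - (T m m' * conj ((A*Aᴴ) m m') - T m m' * conj (T m m')) := by
      intro m m'; rw [map_sub]; ring
    rw [Finset.sum_congr rfl fun m _ => Finset.sum_congr rfl fun m' _ => expand m m']
    simp only [Finset.sum_sub_distrib]
    rw [t1, t2, t3, t4]
    ring
  have hzero := etf_sum_mul_conj_eq_zero total
  intro m m'
  have := hzero (m, m') (Finset.mem_univ _)
  have h2 := sub_eq_zero.1 this
  rw [hS] at h2
  rw [h2]
  rfl

open Finset in
open scoped ComplexConjugate in
private lemma etf_dim (q : ℕ) (hq : 2 ≤ q) :
    (Module.finrank ℂ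
        ↥(LinearMap.ker
          (∑ i ∈ Finset.univ.filter (fun i : Fin (q * (q + 1)) => q ^ 2 - 1 ≤ (i : ℕ)),
            (LinearMap.proj i : (Fin (q * (q + 1)) → ℂ) →ₗ[ℂ] ℂ))) = q ^ 2 + q - 1) := by
  have hsq : q ^ 2 = q * q := sq q
  set φ : (Fin (q * (q + 1)) → ℂ) →ₗ[ℂ] ℂ :=
    ∑ i ∈ Finset.univ.filter (fun i : Fin (q * (q + 1)) => q ^ 2 - 1 ≤ (i : ℕ)),
      (LinearMap.proj i : (Fin (q * (q + 1)) → ℂ) →ₗ[ℂ] ℂ) with hφ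
  have hφ_apply : ∀ x, φ x = ∑ i ∈ Finset.univ.filter (fun i : Fin (q * (q + 1)) => q ^ 2 - 1 ≤ (i : ℕ)), x i := by
    intro x
    rw [hφ]
    simp [LinearMap.sum_apply]
  have hb' : q * (q + 1) = q * q + q := by ring
  have h1q : 1 ≤ q * q := Nat.one_le_iff_ne_zero.2 (by positivity)
  have hlt : q ^ 2 - 1 < q * (q + 1) := by omega
  set i0 : Fin (q * (q + 1)) := ⟨q ^ 2 - 1, hlt⟩ with hi0
  have hx1 : φ (Pi.single i0 1) = 1 := by
    rw [hφ_apply]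
    rw [Finset.sum_eq_single i0]
    · simp
    · intro i _ hne; exact Pi.single_eq_of_ne hne 1
    · intro h
      refine absurd ?_ h
      simp only [Finset.mem_filter, Finset.mem_univ, true_and]
      exact Nat.le_of_eq rfl
  have hsurj : Function.Surjective φ := by
    intro y
    refine ⟨y • (Pi.single i0 1 : Fin (q * (q + 1)) → ℂ), ?_⟩
    rw [LinearMap.map_smul, hx1, smul_eq_mul, mul_one]
  have hrange : LinearMap.range φ = ⊤ := LinearMap.range_eq_top.2 hsurj
  have hrn := LinearMap.finrank_range_add_finrank_ker φ
  rw [hrange] at hrn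
  rw [finrank_top] at hrn
  have h1 : Module.finrank ℂ ℂ = 1 := Module.finrank_self ℂ
  have h2 : Module.finrank ℂ (Fin (q * (q + 1)) → ℂ) = q * (q + 1) := by
    rw [Module.finrank_pi]
    simp
  rw [h1, h2] at hrn
  have hb' : q * (q + 1) = q * q + q := by ring
  have hsq' : q ^ 2 = q * q := sq q
  have h1q : 1 ≤ q * q := Nat.one_le_iff_ne_zero.2 (by positivity)
  omega

-- (b),(c) membership and norms
open Finset in
open scoped ComplexConjugate in
private lemma etf_memb_norm (q : ℕ) (hq : 2 ≤ q)
    (Z : Matrix (Fin (q * (q + 1))) (Fin (q ^ 2)) ℂ)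
    (hZblock : ∀ (i : Fin (q * (q + 1))) (j : Fin (q ^ 2)),
      (j : ℕ) < q * (q - 1) / 2 → q ^ 2 - 1 ≤ (i : ℕ) → Z i j = 0)
    (E : Fin (q ^ 2) → Matrix (Fin (q * (q + 1))) (Fin (q + 1)) ℂ)
    (hE01 : ∀ j i l, E j i l = 0 ∨ E j i l = 1)
    (hEblock : ∀ j : Fin (q ^ 2), q * (q - 1) / 2 ≤ (j : ℕ) →
      ∀ (i : Fin (q * (q + 1))) (l : Fin (q + 1)),
        ((q ^ 2 - 1 ≤ (i : ℕ) ∧ (l : ℕ) < q - 1) ∨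
          ((i : ℕ) < q ^ 2 - 1 ∧ q - 1 ≤ (l : ℕ))) → E j i l = 0)
    (F4 : ∀ j i, ∑ l, E j i l = Z i j)
    (F5 : ∀ j l, ∑ i, E j i l = 1)
    (s : Fin (q + 2) → Fin (q + 1) → ℂ)
    (c : Fin q → Fin (q + 1) → ℂ)
    (hc_sum : ∀ l, c l ⟨q - 1, Nat.sub_lt_succ q 1⟩ + c l ⟨q, Nat.lt_succ_self q⟩ = 0)
    (hinner_same : ∀ (j : Fin (q^2)) (x y : Fin (q+1) → ℂ),
      star (E j *ᵥ x) ⬝ᵥ (E j *ᵥ y) = ∑ m, conj (x m) * y m) :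
    ((∀ j : Fin (q ^ 2), (j : ℕ) < q * (q - 1) / 2 → ∀ l : Fin (q + 2),
        (∑ i ∈ Finset.univ.filter (fun i : Fin (q * (q + 1)) => q ^ 2 - 1 ≤ (i : ℕ)),
          (E j *ᵥ s l) i) = 0) ∧
     (∀ j : Fin (q ^ 2), q * (q - 1) / 2 ≤ (j : ℕ) → ∀ l : Fin q,
        (∑ i ∈ Finset.univ.filter (fun i : Fin (q * (q + 1)) => q ^ 2 - 1 ≤ (i : ℕ)),
          (E j *ᵥ c l) i) = 0) ∧
     (∀ (j : Fin (q ^ 2)) (x : Fin (q+1) → ℂ), (∀ m, ‖x m‖ = 1) →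
        star (E j *ᵥ x) ⬝ᵥ (E j *ᵥ x) = (q : ℂ) + 1)) := by
  have hE0 : ∀ (j : Fin (q ^ 2)), (j : ℕ) < q * (q - 1) / 2 →
      ∀ i : Fin (q * (q + 1)), q ^ 2 - 1 ≤ (i : ℕ) → ∀ l, E j i l = 0 := by
    intro j hj i hi l
    have hz : ∑ l, E j i l = 0 := by rw [F4, hZblock i j hj hi]
    exact etf_boole_sum_eq_zero (fun l _ => hE01 j i l) hz l (Finset.mem_univ l)
  refine ⟨?_, ?_, ?_⟩
  · intro j hj l
    refine Finset.sum_eq_zero fun i hi => ?_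
    have hi' : q ^ 2 - 1 ≤ (i : ℕ) := (Finset.mem_filter.1 hi).2
    simp only [Matrix.mulVec, dotProduct]
    exact Finset.sum_eq_zero fun m _ => by rw [hE0 j hj i hi' m, zero_mul]
  · intro j hj l
    set B := Finset.univ.filter (fun i : Fin (q * (q + 1)) => q ^ 2 - 1 ≤ (i : ℕ)) with hB
    have swap : ∑ i ∈ B, (E j *ᵥ c l) i = ∑ m, (∑ i ∈ B, E j i m) * c l m := by
      simp only [Matrix.mulVec, dotProduct]
      rw [Finset.sum_comm]
      exact Finset.sum_congr rfl fun m _ => by rw [Finset.sum_mul]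
    have hcol : ∀ m : Fin (q + 1), (∑ i ∈ B, E j i m) = if q - 1 ≤ (m : ℕ) then 1 else 0 := by
      intro m
      by_cases hm : q - 1 ≤ (m : ℕ)
      · rw [if_pos hm]
        have split := Finset.sum_filter_add_sum_filter_not Finset.univ
          (fun i : Fin (q * (q + 1)) => q ^ 2 - 1 ≤ (i : ℕ)) (fun i => E j i m)
        have htop : ∑ i ∈ Finset.univ.filter (fun i : Fin (q * (q + 1)) => ¬ (q ^ 2 - 1 ≤ (i : ℕ))), E j i m = 0 := by
          refine Finset.sum_eq_zero fun i hi => ?_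
          have hi' : ¬ (q ^ 2 - 1 ≤ (i : ℕ)) := (Finset.mem_filter.1 hi).2
          exact hEblock j hj i m (Or.inr ⟨by omega, hm⟩)
        rw [← F5 j m, ← split, htop, add_zero]
      · rw [if_neg hm]
        refine Finset.sum_eq_zero fun i hi => ?_
        have hi' : q ^ 2 - 1 ≤ (i : ℕ) := (Finset.mem_filter.1 hi).2
        exact hEblock j hj i m (Or.inl ⟨hi', by omega⟩)
    rw [swap, Finset.sum_congr rfl fun m _ => by rw [hcol m]]
    have hfilter : (Finset.univ.filter (fun m : Fin (q + 1) => q - 1 ≤ (m : ℕ)))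
        = {(⟨q - 1, Nat.sub_lt_succ q 1⟩ : Fin (q + 1)), ⟨q, Nat.lt_succ_self q⟩} := by
      ext m
      simp only [Finset.mem_filter, Finset.mem_univ, true_and, Finset.mem_insert, Finset.mem_singleton]
      constructor
      · intro hm
        have := m.isLt
        rcases Nat.lt_or_ge (m : ℕ) q with h | h
        · left; apply Fin.ext; simp; omega
        · right; apply Fin.ext; simp; omega
      · rintro (rfl | rfl)
        · show q - 1 ≤ q - 1; omega
        · show q - 1 ≤ q; omega
    calc ∑ m : Fin (q + 1), (if q - 1 ≤ (m : ℕ) then 1 else 0) * c l m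
        = ∑ m ∈ Finset.univ.filter (fun m : Fin (q + 1) => q - 1 ≤ (m : ℕ)), c l m := by
          rw [Finset.sum_filter]
          exact Finset.sum_congr rfl fun m _ => by by_cases h : q - 1 ≤ (m : ℕ) <;> simp [h]
      _ = c l ⟨q - 1, Nat.sub_lt_succ q 1⟩ + c l ⟨q, Nat.lt_succ_self q⟩ := by
          rw [hfilter]
          rw [Finset.sum_insert (by simp; omega)]
          rw [Finset.sum_singleton]
      _ = 0 := hc_sum l
  · intro j x hx
    rw [hinner_same]
    rw [Finset.sum_congr rfl fun m _ => etf_unimod_conj_mul (hx m)]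
    simp

open Finset in
open scoped ComplexConjugate in
private lemma etf_halves (q : ℕ) (hq : 2 ≤ q)
    (Z : Matrix (Fin (q * (q + 1))) (Fin (q ^ 2)) ℂ)
    (hZ01 : ∀ i j, Z i j = 0 ∨ Z i j = 1)
    (hZblock : ∀ (i : Fin (q * (q + 1))) (j : Fin (q ^ 2)),
      (j : ℕ) < q * (q - 1) / 2 → q ^ 2 - 1 ≤ (i : ℕ) → Z i j = 0)
    (F1 : ∀ j, ∑ i, Z i j = (q : ℂ) + 1)
    (F2 : ∀ j j', j ≠ j' → ∑ i, Z i j * Z i j' = 1) :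
    ∀ i : Fin (q * (q + 1)), (i : ℕ) < q ^ 2 - 1 →
      2 * (∑ j ∈ Finset.univ.filter (fun j : Fin (q ^ 2) => (j : ℕ) < q * (q - 1) / 2), Z i j)
        = (q : ℂ) := by
  have hsq : q ^ 2 = q * q := sq q
  have hb' : q * (q + 1) = q * q + q := by ring
  have h1q : 2 * 2 ≤ q * q := Nat.mul_le_mul hq hq
  have hv2 : 2 * (q * (q - 1) / 2) = q * (q - 1) := by
    apply Nat.two_mul_div_two_of_even
    rcases Nat.even_or_odd q with h | h
    · exact h.mul_right _
    · exact (Nat.Odd.sub_odd h odd_one).mul_left _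
  have hv3 : q * (q - 1) + q = q * q := by
    have : q - 1 + 1 = q := by omega
    calc q * (q - 1) + q = q * ((q - 1) + 1) := by ring
      _ = q * q := by rw [this]
  set v₀ := q * (q - 1) / 2 with hv₀
  set J1 := Finset.univ.filter (fun j : Fin (q ^ 2) => (j : ℕ) < v₀) with hJ1
  have hcardJ1 : J1.card = v₀ := by
    rw [hJ1, etf_fin_filter_lt_card]; omega
  set D : Fin (q * (q + 1)) → ℂ := fun i => ∑ j ∈ J1, Z i j with hD
  have hconjD : ∀ i, conj (D i) = D i := by
    intro i
    rw [hD]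
    simp only [map_sum]
    refine Finset.sum_congr rfl fun j _ => ?_
    rcases hZ01 i j with h | h <;> simp [h]
  have hDbot : ∀ i : Fin (q * (q + 1)), q ^ 2 - 1 ≤ (i : ℕ) → D i = 0 := by
    intro i hi
    refine Finset.sum_eq_zero fun j hj => hZblock i j ?_ hi
    exact (Finset.mem_filter.1 hj).2
  -- sum of D
  have sum1 : ∑ i, D i = (v₀ : ℂ) * ((q : ℂ) + 1) := by
    rw [hD]
    beta_reduce
    rw [Finset.sum_comm (f := Z)]
    rw [Finset.sum_congr rfl fun j _ => F1 j, Finset.sum_const, hcardJ1]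
    simp only [nsmul_eq_mul]
  -- sum of D squared
  have sum2 : ∑ i, D i * D i = (v₀ : ℂ) * ((q : ℂ) + 1) + (v₀ : ℂ) * ((v₀ : ℂ) - 1) := by
    have expand : ∑ i, D i * D i = ∑ j ∈ J1, ∑ j' ∈ J1, ∑ i, Z i j * Z i j' := by
      rw [hD]
      simp only
      calc ∑ i, (∑ j ∈ J1, Z i j) * (∑ j' ∈ J1, Z i j')
          = ∑ i, ∑ j ∈ J1, ∑ j' ∈ J1, Z i j * Z i j' := by
            exact Finset.sum_congr rfl fun i _ => Finset.sum_mul_sum _ _ _ _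
        _ = ∑ j ∈ J1, ∑ i, ∑ j' ∈ J1, Z i j * Z i j' := Finset.sum_comm
        _ = ∑ j ∈ J1, ∑ j' ∈ J1, ∑ i, Z i j * Z i j' := Finset.sum_congr rfl fun j _ => Finset.sum_comm
    rw [expand]
    have inner : ∀ j ∈ J1, ∑ j' ∈ J1, ∑ i, Z i j * Z i j'
        = ((q : ℂ) + 1) + ((v₀ : ℂ) - 1) := by
      intro j hj
      rw [← Finset.add_sum_erase _ _ hj]
      congr 1
      · rw [← F1 j]
        refine Finset.sum_congr rfl fun i _ => ?_
        rcases hZ01 i j with h | h <;> simp [h]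
      · rw [Finset.sum_congr rfl fun j' hj' => F2 j j' (Ne.symm (Finset.ne_of_mem_erase hj'))]
        have h1v : 1 ≤ v₀ := by
          have h2' : (2:ℕ) * 1 ≤ q * (q - 1) := Nat.mul_le_mul hq (by omega)
          omega
        rw [Finset.sum_const, Finset.card_erase_of_mem hj, hcardJ1, nsmul_eq_mul, mul_one,
          Nat.cast_sub h1v, Nat.cast_one]
    rw [Finset.sum_congr rfl inner, Finset.sum_const, hcardJ1]
    simp only [nsmul_eq_mul]
    ring
  -- restrict to top rows
  set TOP := Finset.univ.filter (fun i : Fin (q * (q + 1)) => ¬ (q ^ 2 - 1 ≤ (i : ℕ))) with hTOP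
  have hcardTOP : TOP.card = q ^ 2 - 1 := by
    have : TOP = Finset.univ.filter (fun i : Fin (q * (q + 1)) => (i : ℕ) < q ^ 2 - 1) := by
      ext i; simp [hTOP]; omega
    rw [this, etf_fin_filter_lt_card]
    omega
  have hsplit : ∀ (f : Fin (q * (q + 1)) → ℂ),
      (∀ i : Fin (q * (q + 1)), q ^ 2 - 1 ≤ (i : ℕ) → f i = 0) →
        ∑ i ∈ TOP, f i = ∑ i, f i := by
    intro f hf
    rw [← Finset.sum_filter_add_sum_filter_not Finset.univ
      (fun i : Fin (q * (q + 1)) => ¬ (q ^ 2 - 1 ≤ (i : ℕ))) f]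
    have : ∑ i ∈ Finset.univ.filter (fun i : Fin (q * (q + 1)) => ¬¬ (q ^ 2 - 1 ≤ (i : ℕ))), f i = 0 := by
      refine Finset.sum_eq_zero fun i hi => ?_
      have := (Finset.mem_filter.1 hi).2
      exact hf i (not_not.1 this)
    rw [this, add_zero, hTOP]
  have sumTop1 : ∑ i ∈ TOP, D i = (v₀ : ℂ) * ((q : ℂ) + 1) := by
    rw [hsplit D hDbot, sum1]
  have sumTop2 : ∑ i ∈ TOP, D i * D i = (v₀ : ℂ) * ((q : ℂ) + 1) + (v₀ : ℂ) * ((v₀ : ℂ) - 1) := by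
    rw [hsplit (fun i => D i * D i) (fun i hi => by show D i * D i = 0; rw [hDbot i hi, mul_zero]), sum2]
  -- the variance is zero
  have hvar : ∑ i ∈ TOP, (2 * D i - (q : ℂ)) * conj (2 * D i - (q : ℂ)) = 0 := by
    have expand : ∀ i, (2 * D i - (q : ℂ)) * conj (2 * D i - (q : ℂ))
        = 4 * (D i * D i) - 4 * (q : ℂ) * D i + (q : ℂ) * (q : ℂ) := by
      intro i
      rw [map_sub, _root_.map_mul, hconjD]
      simp only [Complex.conj_natCast, map_ofNat]
      ring
    rw [Finset.sum_congr rfl fun i _ => expand i]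
    simp only [Finset.sum_add_distrib, Finset.sum_sub_distrib, ← Finset.mul_sum, Finset.sum_const]
    rw [sumTop1, sumTop2, hcardTOP]
    have hcast : 2 * (v₀ : ℂ) = (q : ℂ) * (q : ℂ) - (q : ℂ) := by
      have hqqq : q ≤ q * q := Nat.le_mul_of_pos_left q (by omega)
      have hnn : (2 * v₀ : ℕ) = q * q - q := by omega
      have h2 : ((2 * v₀ : ℕ) : ℂ) = ((q * q - q : ℕ) : ℂ) := by rw [hnn]
      push_cast [Nat.cast_sub hqqq] at h2
      exact h2
    have hcastcard : ((q ^ 2 - 1 : ℕ) : ℂ) = (q : ℂ) * (q : ℂ) - 1 := by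
      rw [Nat.cast_sub (show 1 ≤ q ^ 2 by omega)]
      push_cast
      ring
    simp only [nsmul_eq_mul]
    rw [hcastcard]
    linear_combination (2 * (v₀ : ℂ) - (q : ℂ) * (q : ℂ) - (q : ℂ)) * hcast
  intro i hi
  have hmem : i ∈ TOP := by
    rw [hTOP]; simp; omega
  have := etf_sum_mul_conj_eq_zero hvar i hmem
  have h2 : 2 * D i = (q : ℂ) := by linear_combination this
  exact h2

open Finset in
open scoped ComplexConjugate in
set_option maxHeartbeats 1000000 in
private lemma etf_final (q : ℕ) (hq : 2 ≤ q)
    (Z : Matrix (Fin (q * (q + 1))) (Fin (q ^ 2)) ℂ)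
    (hZ01 : ∀ i j, Z i j = 0 ∨ Z i j = 1)
    (hZblock : ∀ (i : Fin (q * (q + 1))) (j : Fin (q ^ 2)),
      (j : ℕ) < q * (q - 1) / 2 → q ^ 2 - 1 ≤ (i : ℕ) → Z i j = 0)
    (E : Fin (q ^ 2) → Matrix (Fin (q * (q + 1))) (Fin (q + 1)) ℂ)
    (hE01 : ∀ j i l, E j i l = 0 ∨ E j i l = 1)
    (hconjE : ∀ j i l, conj (E j i l) = E j i l)
    (hEblock : ∀ j : Fin (q ^ 2), q * (q - 1) / 2 ≤ (j : ℕ) →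
      ∀ (i : Fin (q * (q + 1))) (l : Fin (q + 1)),
        ((q ^ 2 - 1 ≤ (i : ℕ) ∧ (l : ℕ) < q - 1) ∨
          ((i : ℕ) < q ^ 2 - 1 ∧ q - 1 ≤ (l : ℕ))) → E j i l = 0)
    (F2 : ∀ j j', j ≠ j' → ∑ i, Z i j * Z i j' = 1)
    (F3 : ∀ i, ∑ j, Z i j = (q : ℂ))
    (F4 : ∀ j i, ∑ l, E j i l = Z i j)
    (F5 : ∀ j l, ∑ i, E j i l = 1)
    (F6' : ∀ j (l l' : Fin (q+1)), l ≠ l' → ∀ i, E j i l * E j i l' = 0)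
    (F7 : ∀ j l, (univ.filter (fun i : Fin (q*(q+1)) => E j i l = 1)).card = 1)
    (s : Fin (q + 2) → Fin (q + 1) → ℂ)
    (c : Fin q → Fin (q + 1) → ℂ)
    (hhalf : ∀ i : Fin (q * (q + 1)), (i : ℕ) < q ^ 2 - 1 →
      2 * (∑ j ∈ Finset.univ.filter (fun j : Fin (q ^ 2) => (j : ℕ) < q * (q - 1) / 2), Z i j)
        = (q : ℂ))
    (Sfact : ∀ m m', (∑ l : Fin (q+2), s l m * conj (s l m')) = if m = m' then (q:ℂ)+2 else 0)
    (Cfact : ∀ m m', (∑ l : Fin q, c l m * conj (c l m'))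
      = (if m = m' then (q:ℂ) else 0)
        + (if m = (⟨q-1, Nat.sub_lt_succ q 1⟩ : Fin (q+1)) ∧ m' = (⟨q, Nat.lt_succ_self q⟩ : Fin (q+1)) then -(q:ℂ) else 0)
        + (if m = (⟨q, Nat.lt_succ_self q⟩ : Fin (q+1)) ∧ m' = (⟨q-1, Nat.sub_lt_succ q 1⟩ : Fin (q+1)) then -(q:ℂ) else 0)) :
    ((∑ j ∈ Finset.univ.filter (fun j : Fin (q ^ 2) => (j : ℕ) < q * (q - 1) / 2),
        ∑ l : Fin (q + 2), vecMulVec (E j *ᵥ s l) (star (E j *ᵥ s l))) +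
      (∑ j ∈ Finset.univ.filter (fun j : Fin (q ^ 2) => q * (q - 1) / 2 ≤ (j : ℕ)),
        ∑ l : Fin q, vecMulVec (E j *ᵥ c l) (star (E j *ᵥ c l)))
      = ((q : ℂ) * ((q : ℂ) + 1)) •
        ((1 : Matrix (Fin (q * (q + 1))) (Fin (q * (q + 1))) ℂ) -
          ((q : ℂ) + 1)⁻¹ •
            vecMulVec (fun i : Fin (q * (q + 1)) => if q ^ 2 - 1 ≤ (i : ℕ) then 1 else 0)
              (fun i : Fin (q * (q + 1)) => if q ^ 2 - 1 ≤ (i : ℕ) then 1 else 0))) := by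
  have hsq : q ^ 2 = q * q := sq q
  have hb' : q * (q + 1) = q * q + q := by ring
  have h4q : 2 * 2 ≤ q * q := Nat.mul_le_mul hq hq
  set v₀ := q * (q - 1) / 2 with hv₀
  set lo : Fin (q+1) := ⟨q-1, Nat.sub_lt_succ q 1⟩ with hlo
  set hi : Fin (q+1) := ⟨q, Nat.lt_succ_self q⟩ with hhi
  have hlohi : lo ≠ hi := by
    intro h
    have := congrArg Fin.val h
    simp [hlo, hhi] at this
    omega
  set J1 := Finset.univ.filter (fun j : Fin (q ^ 2) => (j : ℕ) < v₀) with hJ1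
  set J2 := Finset.univ.filter (fun j : Fin (q ^ 2) => v₀ ≤ (j : ℕ)) with hJ2
  set B := Finset.univ.filter (fun i : Fin (q * (q + 1)) => q ^ 2 - 1 ≤ (i : ℕ)) with hB
  have hBcard : B.card = q + 1 := by
    rw [hB, etf_fin_filter_le_card]; omega
  -- Step A : per-column reduction of the rank-one sums
  have hlhs : ∀ (j : Fin (q^2)) (k : ℕ) (x : Fin k → Fin (q+1) → ℂ) (i i' : Fin (q*(q+1))),
      ∑ l : Fin k, (E j *ᵥ x l) i * conj ((E j *ᵥ x l) i')
        = ∑ m, ∑ m', E j i m * E j i' m' * (∑ l, x l m * conj (x l m')) := by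
    intro j k x i i'
    simp only [Matrix.mulVec, dotProduct]
    calc ∑ l : Fin k, (∑ m, E j i m * x l m) * conj (∑ m', E j i' m' * x l m')
        = ∑ l : Fin k, (∑ m, E j i m * x l m) * (∑ m', E j i' m' * conj (x l m')) := by
          refine Finset.sum_congr rfl fun l _ => ?_
          congr 1
          rw [map_sum]
          exact Finset.sum_congr rfl fun m' _ => by rw [_root_.map_mul, hconjE]
      _ = ∑ l : Fin k, ∑ m, ∑ m', (E j i m * x l m) * (E j i' m' * conj (x l m')) :=
          Finset.sum_congr rfl fun l _ => Finset.sum_mul_sum _ _ _ _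
      _ = ∑ m, ∑ l : Fin k, ∑ m', (E j i m * x l m) * (E j i' m' * conj (x l m')) :=
          Finset.sum_comm
      _ = ∑ m, ∑ m', ∑ l : Fin k, (E j i m * x l m) * (E j i' m' * conj (x l m')) :=
          Finset.sum_congr rfl fun m _ => Finset.sum_comm
      _ = ∑ m, ∑ m', E j i m * E j i' m' * (∑ l, x l m * conj (x l m')) := by
          refine Finset.sum_congr rfl fun m _ => Finset.sum_congr rfl fun m' _ => ?_
          rw [Finset.mul_sum]
          exact Finset.sum_congr rfl fun l _ => by ring
  -- Step C : diagonal structure of E j (E j)ᵀ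
  have Pfact : ∀ (j : Fin (q^2)) (i i' : Fin (q*(q+1))),
      ∑ m, E j i m * E j i' m = if i = i' then Z i j else 0 := by
    intro j i i'
    by_cases h : i = i'
    · subst h
      rw [if_pos rfl, ← F4 j i]
      refine Finset.sum_congr rfl fun m _ => ?_
      rcases hE01 j i m with h' | h' <;> simp [h']
    · rw [if_neg h]
      refine Finset.sum_eq_zero fun m _ => ?_
      rcases hE01 j i m with h1 | h1
      · rw [h1, zero_mul]
      rcases hE01 j i' m with h2 | h2
      · rw [h2, mul_zero]
      exfalso
      have hsub : ({i, i'} : Finset (Fin (q*(q+1)))) ⊆ univ.filter (fun k => E j k m = 1) := by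
        intro k hk
        rcases Finset.mem_insert.1 hk with rfl | hk
        · exact Finset.mem_filter.2 ⟨Finset.mem_univ _, h1⟩
        · rw [Finset.mem_singleton.1 hk]
          exact Finset.mem_filter.2 ⟨Finset.mem_univ _, h2⟩
      have h2' : 2 ≤ (univ.filter (fun k => E j k m = 1)).card := by
        have := Finset.card_le_card hsub
        rwa [Finset.card_pair h] at this
      rw [F7 j m] at h2'
      omega
  -- B1' : simplex block
  have B1' : ∀ (j : Fin (q^2)) (i i' : Fin (q*(q+1))),
      ∑ l : Fin (q+2), (E j *ᵥ s l) i * conj ((E j *ᵥ s l) i')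
        = ((q:ℂ)+2) * (if i = i' then Z i j else 0) := by
    intro j i i'
    rw [hlhs]
    rw [Finset.sum_congr rfl fun m _ => Finset.sum_congr rfl fun m' _ => by rw [Sfact m m']]
    rw [etf_diag_sum (fun m m' => E j i m * E j i' m') ((q:ℂ)+2)]
    rw [← Finset.sum_mul, Pfact, mul_comm]
  -- B2' : cosimplex block
  have B2' : ∀ (j : Fin (q^2)) (i i' : Fin (q*(q+1))),
      ∑ l : Fin q, (E j *ᵥ c l) i * conj ((E j *ᵥ c l) i')
        = (q:ℂ) * (if i = i' then Z i j else 0)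
          + (E j i lo * E j i' hi) * (-(q:ℂ)) + (E j i hi * E j i' lo) * (-(q:ℂ)) := by
    intro j i i'
    rw [hlhs]
    rw [Finset.sum_congr rfl fun m _ => Finset.sum_congr rfl fun m' _ => by rw [Cfact m m']]
    have expand : ∀ (m m' : Fin (q+1)),
        E j i m * E j i' m' * ((if m = m' then (q:ℂ) else 0)
          + (if m = lo ∧ m' = hi then -(q:ℂ) else 0)
          + (if m = hi ∧ m' = lo then -(q:ℂ) else 0))
        = E j i m * E j i' m' * (if m = m' then (q:ℂ) else 0)
          + E j i m * E j i' m' * (if m = lo ∧ m' = hi then -(q:ℂ) else 0)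
          + E j i m * E j i' m' * (if m = hi ∧ m' = lo then -(q:ℂ) else 0) := by
      intro m m'; ring
    rw [Finset.sum_congr rfl fun m _ => Finset.sum_congr rfl fun m' _ => expand m m']
    simp only [Finset.sum_add_distrib]
    rw [etf_diag_sum (fun m m' => E j i m * E j i' m') (q:ℂ),
      etf_pair_sum (fun m m' => E j i m * E j i' m') lo hi (-(q:ℂ)),
      etf_pair_sum (fun m m' => E j i m * E j i' m') hi lo (-(q:ℂ))]
    rw [← Finset.sum_mul, Pfact, mul_comm]
  -- helper : an entry 1 forces Z = 1
  have hZ1 : ∀ (j : Fin (q^2)) (i : Fin (q*(q+1))) (m : Fin (q+1)), E j i m = 1 → Z i j = 1 := by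
    intro j i m hm
    rcases hZ01 i j with h | h
    · exfalso
      have h0 : ∑ l, E j i l = 0 := by rw [F4, h]
      rw [etf_boole_sum (fun l _ => hE01 j i l)] at h0
      have hc : (univ.filter (fun l : Fin (q+1) => E j i l = 1)).card = 0 := by exact_mod_cast h0
      have : m ∈ univ.filter (fun l : Fin (q+1) => E j i l = 1) :=
        Finset.mem_filter.2 ⟨Finset.mem_univ _, hm⟩
      rw [Finset.card_eq_zero.1 hc] at this
      exact absurd this (Finset.notMem_empty m)
    · exact h
  -- bottom column sums for j in J2
  have hBcol : ∀ j : Fin (q^2), v₀ ≤ (j:ℕ) → ∀ m : Fin (q+1), q-1 ≤ (m:ℕ) →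
      ∑ i ∈ B, E j i m = 1 := by
    intro j hj m hm
    have split := Finset.sum_filter_add_sum_filter_not Finset.univ
      (fun i : Fin (q*(q+1)) => q^2-1 ≤ (i:ℕ)) (fun i => E j i m)
    have htop : ∑ i ∈ univ.filter (fun i : Fin (q*(q+1)) => ¬ (q^2-1 ≤ (i:ℕ))), E j i m = 0 :=
      Finset.sum_eq_zero fun i hi =>
        hEblock j hj i m (Or.inr ⟨by have := (Finset.mem_filter.1 hi).2; omega, hm⟩)
    rw [htop, add_zero] at split
    rw [← F5 j m, ← split]
  -- the pair-count function
  set Xt : Fin (q^2) → Fin (q*(q+1)) → Fin (q*(q+1)) → ℂ :=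
    fun j i i' => E j i lo * E j i' hi + E j i hi * E j i' lo with hXt
  have hXdiagzero : ∀ j i, Xt j i i = 0 := by
    intro j i
    simp only [hXt]
    rw [F6' j lo hi hlohi i, F6' j hi lo hlohi.symm i, add_zero]
  have E1 : ∀ j i i', Xt j i i' = 0 ∨ Xt j i i' = 1 := by
    intro j i i'
    rcases hE01 j i lo with h1|h1 <;> rcases hE01 j i' hi with h2|h2 <;>
      rcases hE01 j i hi with h3|h3 <;> rcases hE01 j i' lo with h4|h4 <;>
      first
        | (left; simp [hXt, h1, h2, h3, h4]; done)
        | (right; simp [hXt, h1, h2, h3, h4]; done)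
        | (exfalso; have hbad := F6' j lo hi hlohi i; rw [h1, h3] at hbad; norm_num at hbad)
  have Xkey : ∀ j i i', Xt j i i' = 1 → Z i j = 1 ∧ Z i' j = 1 := by
    intro j i i' hj
    rcases hE01 j i lo with e1|e1 <;> rcases hE01 j i' hi with e2|e2 <;>
      rcases hE01 j i hi with e3|e3 <;> rcases hE01 j i' lo with e4|e4 <;>
      simp only [hXt, e1, e2, e3, e4, mul_zero, zero_mul, mul_one, one_mul,
        add_zero, zero_add] at hj <;>
      first
        | exact ⟨hZ1 j i lo e1, hZ1 j i' hi e2⟩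
        | exact ⟨hZ1 j i hi e3, hZ1 j i' lo e4⟩
        | exact absurd hj (by norm_num)
  have Xcard_le : ∀ i i', i ≠ i' → (J2.filter (fun j => Xt j i i' = 1)).card ≤ 1 := by
    intro i i' hne
    refine Finset.card_le_one.2 ?_
    intro a ha b hb
    by_contra hab
    obtain ⟨hZa, hZa'⟩ := Xkey a i i' (Finset.mem_filter.1 ha).2
    obtain ⟨hZb, hZb'⟩ := Xkey b i i' (Finset.mem_filter.1 hb).2
    have hF := F2 a b hab
    rw [etf_boole_sum (fun k _ => by
      rcases hZ01 k a with h|h <;> rcases hZ01 k b with h'|h' <;> simp [h, h'])] at hF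
    have hcard : (univ.filter (fun k : Fin (q*(q+1)) => Z k a * Z k b = 1)).card = 1 := by
      exact_mod_cast hF
    have hsub : ({i, i'} : Finset (Fin (q*(q+1)))) ⊆
        univ.filter (fun k => Z k a * Z k b = 1) := by
      intro k hk
      rcases Finset.mem_insert.1 hk with rfl | hk
      · exact Finset.mem_filter.2 ⟨Finset.mem_univ _, by rw [hZa, hZb, one_mul]⟩
      · rw [Finset.mem_singleton.1 hk]
        exact Finset.mem_filter.2 ⟨Finset.mem_univ _, by rw [hZa', hZb', one_mul]⟩
    have hle := Finset.card_le_card hsub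
    rw [Finset.card_pair hne, hcard] at hle
    omega
  -- the off-diagonal bottom pairs
  set Poff := (B ×ˢ B).filter (fun p => p.1 ≠ p.2) with hPoff
  have hvlo : q - 1 ≤ (lo : ℕ) := Nat.le_of_eq rfl
  have hvhi : q - 1 ≤ (hi : ℕ) := by show q - 1 ≤ q; omega
  have hsum_per_j : ∀ j ∈ J2, ∑ p ∈ Poff, Xt j p.1 p.2 = 2 := by
    intro j hj
    have hj' : v₀ ≤ (j:ℕ) := (Finset.mem_filter.1 hj).2
    have hprod : ∑ p ∈ B ×ˢ B, Xt j p.1 p.2 = 2 := by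
      rw [Finset.sum_product]
      have hinner : ∀ i ∈ B, ∑ i' ∈ B, Xt j i i'
          = E j i lo * (∑ i' ∈ B, E j i' hi) + E j i hi * (∑ i' ∈ B, E j i' lo) := by
        intro i _
        simp only [hXt]
        rw [Finset.sum_add_distrib, Finset.mul_sum, Finset.mul_sum]
      rw [Finset.sum_congr rfl hinner]
      rw [hBcol j hj' hi hvhi, hBcol j hj' lo hvlo]
      simp only [mul_one]
      rw [Finset.sum_add_distrib, hBcol j hj' lo hvlo, hBcol j hj' hi hvhi]
      norm_num
    have hdiag : ∑ p ∈ (B ×ˢ B).filter (fun p => ¬ p.1 ≠ p.2), Xt j p.1 p.2 = 0 := by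
      refine Finset.sum_eq_zero fun p hp => ?_
      have h12 : p.1 = p.2 := not_not.1 (Finset.mem_filter.1 hp).2
      rw [← h12]
      exact hXdiagzero j p.1
    have hfil := Finset.sum_filter_add_sum_filter_not (B ×ˢ B)
      (fun p => p.1 ≠ p.2) (fun p => Xt j p.1 p.2)
    rw [hdiag, add_zero] at hfil
    rw [← hPoff] at hfil
    exact hfil.trans hprod
  have hPoffcard : Poff.card = q * (q + 1) := by
    have htot := Finset.card_filter_add_card_filter_not
      (s := B ×ˢ B) (p := fun p => p.1 ≠ p.2)
    rw [← hPoff] at htot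
    have hprodcard : (B ×ˢ B).card = (q+1) * (q+1) := by
      rw [Finset.card_product, hBcard]
    have hdiagcard : ((B ×ˢ B).filter (fun p => ¬ p.1 ≠ p.2)).card = B.card := by
      apply Finset.card_bij (fun p (_ : p ∈ (B ×ˢ B).filter (fun p => ¬ p.1 ≠ p.2)) => p.1)
      · intro p hp
        exact (Finset.mem_product.1 (Finset.mem_filter.1 hp).1).1
      · intro p hp p' hp' hpp
        have h1 : p.1 = p.2 := not_not.1 (Finset.mem_filter.1 hp).2
        have h2 : p'.1 = p'.2 := not_not.1 (Finset.mem_filter.1 hp').2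
        exact Prod.ext hpp (h1 ▸ h2 ▸ hpp)
      · intro i hiB
        exact ⟨(i, i), Finset.mem_filter.2 ⟨Finset.mem_product.2 ⟨hiB, hiB⟩, by simp⟩, rfl⟩
    have hring : (q+1) * (q+1) = q * (q+1) + (q+1) := by ring
    rw [hprodcard, hdiagcard, hBcard] at htot
    omega
  have hv2 : 2 * v₀ = q * (q - 1) := by
    rw [hv₀]
    apply Nat.two_mul_div_two_of_even
    rcases Nat.even_or_odd q with h | h
    · exact h.mul_right _
    · exact (Nat.Odd.sub_odd h odd_one).mul_left _
  have hv3 : q * (q - 1) + q = q * q := by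
    have h1 : q - 1 + 1 = q := by omega
    calc q * (q - 1) + q = q * ((q - 1) + 1) := by ring
      _ = q * q := by rw [h1]
  have hXtotal : ∑ p ∈ Poff, (∑ j ∈ J2, Xt j p.1 p.2) = ((q * (q+1) : ℕ) : ℂ) := by
    rw [Finset.sum_comm]
    rw [Finset.sum_congr rfl hsum_per_j, Finset.sum_const]
    have hJ2card : J2.card = q^2 - v₀ := by rw [hJ2, etf_fin_filter_le_card]
    have hnat : (q^2 - v₀) * 2 = q * (q+1) := by omega
    rw [hJ2card, nsmul_eq_mul]
    exact_mod_cast congrArg (Nat.cast : ℕ → ℂ) hnat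
  have Xone : ∀ (i i' : Fin (q*(q+1))), i ≠ i' → q^2-1 ≤ (i:ℕ) → q^2-1 ≤ (i':ℕ) →
      (∑ j ∈ J2, Xt j i i') = 1 := by
    have hg01 : ∀ p ∈ Poff, (∑ j ∈ J2, Xt j p.1 p.2) = 0 ∨ (∑ j ∈ J2, Xt j p.1 p.2) = 1 := by
      intro p hp
      have hne := (Finset.mem_filter.1 hp).2
      rw [etf_boole_sum (fun j _ => E1 j p.1 p.2)]
      have hle := Xcard_le p.1 p.2 hne
      rcases Nat.le_one_iff_eq_zero_or_eq_one.1 hle with h | h <;> rw [h]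
      · left; norm_num
      · right; norm_num
    have hsum := hXtotal
    rw [etf_boole_sum hg01] at hsum
    have hcard : (Poff.filter (fun p => (∑ j ∈ J2, Xt j p.1 p.2) = 1)).card = q*(q+1) := by
      exact_mod_cast hsum
    have heq : Poff.filter (fun p => (∑ j ∈ J2, Xt j p.1 p.2) = 1) = Poff :=
      Finset.eq_of_subset_of_card_le (Finset.filter_subset _ _) (by rw [hcard, hPoffcard])
    intro i i' hne hiB hiB'
    have hp : (i, i') ∈ Poff := by
      rw [hPoff]
      refine Finset.mem_filter.2 ⟨Finset.mem_product.2 ⟨?_, ?_⟩, hne⟩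
      · exact Finset.mem_filter.2 ⟨Finset.mem_univ _, hiB⟩
      · exact Finset.mem_filter.2 ⟨Finset.mem_univ _, hiB'⟩
    have := heq ▸ hp
    exact (Finset.mem_filter.1 this).2
  -- row-sum split
  have hD12 : ∀ i : Fin (q*(q+1)), (∑ j ∈ J1, Z i j) + (∑ j ∈ J2, Z i j) = (q:ℂ) := by
    intro i
    have hsplit := Finset.sum_filter_add_sum_filter_not Finset.univ
      (fun j : Fin (q^2) => (j:ℕ) < v₀) (fun j => Z i j)
    have hJ2' : Finset.univ.filter (fun j : Fin (q^2) => ¬ ((j:ℕ) < v₀)) = J2 := by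
      rw [hJ2]; ext j; simp [not_lt]
    rw [hJ2'] at hsplit
    exact hsplit.trans (F3 i)
  -- final assembly
  have hq1ne : ((q:ℂ)+1) ≠ 0 := by
    have := Nat.cast_add_one_ne_zero (R := ℂ) q
    exact_mod_cast this
  ext i i'
  simp only [Matrix.add_apply, Matrix.sum_apply, Matrix.vecMulVec_apply, Matrix.smul_apply,
    Matrix.sub_apply, Matrix.one_apply, smul_eq_mul, Pi.star_apply, Complex.star_def]
  rw [Finset.sum_congr rfl (fun j _ => B1' j i i'),
      Finset.sum_congr rfl (fun j _ => B2' j i i')]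
  have hsplit2 : ∀ j : Fin (q^2),
      (q:ℂ) * (if i = i' then Z i j else 0)
        + (E j i lo * E j i' hi) * (-(q:ℂ)) + (E j i hi * E j i' lo) * (-(q:ℂ))
      = (q:ℂ) * (if i = i' then Z i j else 0) + (-(q:ℂ)) * Xt j i i' := by
    intro j; simp only [hXt]; ring
  rw [Finset.sum_congr rfl (fun j _ => hsplit2 j)]
  rw [Finset.sum_add_distrib, ← Finset.mul_sum, ← Finset.mul_sum, ← Finset.mul_sum]
  have hite1 : (∑ j ∈ J1, if i = i' then Z i j else 0)
      = if i = i' then ∑ j ∈ J1, Z i j else 0 := by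
    by_cases h : i = i' <;> simp [h]
  have hite2 : (∑ j ∈ J2, if i = i' then Z i j else 0)
      = if i = i' then ∑ j ∈ J2, Z i j else 0 := by
    by_cases h : i = i' <;> simp [h]
  rw [hite1, hite2]
  by_cases hii : i = i'
  · subst hii
    have hif : ∀ X : ℂ, (if i = i then X else 0) = X := fun X => if_pos rfl
    rw [hif, hif, hif]
    have hX0 : ∑ j ∈ J2, Xt j i i = 0 :=
      Finset.sum_eq_zero fun j _ => hXdiagzero j i
    rw [hX0, mul_zero, add_zero]
    have hinv : ((q:ℂ)+1) * ((q:ℂ)+1)⁻¹ = 1 := mul_inv_cancel₀ hq1ne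
    by_cases htop : q^2 - 1 ≤ (i:ℕ)
    · rw [if_pos htop]
      have hD1 : ∑ j ∈ J1, Z i j = 0 :=
        Finset.sum_eq_zero fun j hj => hZblock i j (Finset.mem_filter.1 hj).2 htop
      have hD2 := hD12 i
      rw [hD1, zero_add] at hD2
      rw [hD1, mul_zero, zero_add, hD2]
      linear_combination (q:ℂ) * hinv
    · rw [if_neg htop]
      have hD1 := hhalf i (by omega)
      have hD2 := hD12 i
      linear_combination hD1 + (q:ℂ) * hD2
  · rw [if_neg hii, if_neg hii, if_neg hii]
    rw [mul_zero, mul_zero, zero_add, zero_add]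
    by_cases hbi : q^2 - 1 ≤ (i:ℕ)
    · by_cases hbi' : q^2 - 1 ≤ (i':ℕ)
      · rw [if_pos hbi, if_pos hbi']
        rw [Xone i i' hii hbi hbi']
        have hinv : ((q:ℂ)+1) * ((q:ℂ)+1)⁻¹ = 1 := mul_inv_cancel₀ hq1ne
        linear_combination (q:ℂ) * hinv
      · rw [if_neg hbi']
        have hX0 : ∑ j ∈ J2, Xt j i i' = 0 := by
          refine Finset.sum_eq_zero fun j hj => ?_
          have hj' : v₀ ≤ (j:ℕ) := (Finset.mem_filter.1 hj).2
          have e2 : E j i' hi = 0 := hEblock j hj' i' hi (Or.inr ⟨by omega, hvhi⟩)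
          have e4 : E j i' lo = 0 := hEblock j hj' i' lo (Or.inr ⟨by omega, hvlo⟩)
          simp only [hXt]
          rw [e2, e4, mul_zero, mul_zero, add_zero]
        rw [hX0]
        ring
    · rw [if_neg hbi]
      have hX0 : ∑ j ∈ J2, Xt j i i' = 0 := by
        refine Finset.sum_eq_zero fun j hj => ?_
        have hj' : v₀ ≤ (j:ℕ) := (Finset.mem_filter.1 hj).2
        have e1 : E j i lo = 0 := hEblock j hj' i lo (Or.inr ⟨by omega, hvlo⟩)
        have e3 : E j i hi = 0 := hEblock j hj' i hi (Or.inr ⟨by omega, hvhi⟩)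
        simp only [hXt]
        rw [e1, e3, zero_mul, zero_mul, add_zero]
      rw [hX0]
      ring

set_option maxHeartbeats 1000000 in
open Finset in
open scoped ComplexConjugate in
/-- The main construction: ETFs from hyperovals. Let `Z` be the incidence matrix of an
affine plane of order `q` whose bottom-left `(q+1) × (q(q−1)/2)` block vanishes (the form
arising from a hyperoval), let `E j` be embeddings for the columns of `Z`, aligned with
the block structure for `j > q(q−1)/2`, let `s` be a unimodular simplex and `c` a
unimodular cosimplex in `ℂ^{q+1}`. Then the `q(q²+q−1)` vectors `E j *ᵥ s l`
(`j ≤ q(q−1)/2`) and `E j *ᵥ c l` (`j > q(q−1)/2`) all lie in the `(q²+q−1)`-dimensional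
subspace `H` of vectors whose last `q+1` coordinates sum to zero, have squared norm
`q+1`, pairwise inner products of modulus `1`, and their rank-one outer products sum to
`q(q+1)` times the orthogonal projection onto `H`: they form an equiangular tight frame
for `H`. -/
theorem etf_from_hyperoval (q : ℕ) (hq : 2 ≤ q)
    (Z : Matrix (Fin (q * (q + 1))) (Fin (q ^ 2)) ℂ)
    (hZ01 : ∀ i j, Z i j = 0 ∨ Z i j = 1)
    (hZrow : Z *ᵥ 1 = (q : ℂ) • 1)
    (hZgram : Zᵀ * Z = (q : ℂ) • 1 + Matrix.of fun _ _ => 1)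
    (hZblock : ∀ (i : Fin (q * (q + 1))) (j : Fin (q ^ 2)),
      (j : ℕ) < q * (q - 1) / 2 → q ^ 2 - 1 ≤ (i : ℕ) → Z i j = 0)
    (E : Fin (q ^ 2) → Matrix (Fin (q * (q + 1))) (Fin (q + 1)) ℂ)
    (hE01 : ∀ j i l, E j i l = 0 ∨ E j i l = 1)
    (hEiso : ∀ j, (E j)ᵀ * E j = 1)
    (hEcol : ∀ j i, (E j *ᵥ 1) i = Z i j)
    (hEblock : ∀ j : Fin (q ^ 2), q * (q - 1) / 2 ≤ (j : ℕ) →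
      ∀ (i : Fin (q * (q + 1))) (l : Fin (q + 1)),
        ((q ^ 2 - 1 ≤ (i : ℕ) ∧ (l : ℕ) < q - 1) ∨
          ((i : ℕ) < q ^ 2 - 1 ∧ q - 1 ≤ (l : ℕ))) → E j i l = 0)
    (s : Fin (q + 2) → Fin (q + 1) → ℂ)
    (hs_unimod : ∀ l i, ‖s l i‖ = 1)
    (hs_ang : ∀ l l', l ≠ l' → ‖star (s l) ⬝ᵥ s l'‖ = 1)
    (c : Fin q → Fin (q + 1) → ℂ)
    (hc_unimod : ∀ l i, ‖c l i‖ = 1)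
    (hc_sum : ∀ l, c l ⟨q - 1, by omega⟩ + c l ⟨q, by omega⟩ = 0)
    (hc_ang : ∀ l l', l ≠ l' → ‖star (c l) ⬝ᵥ c l'‖ = 1) :
    -- the subspace `H` has dimension `q² + q − 1`
    (Module.finrank ℂ
        ↥(LinearMap.ker
          (∑ i ∈ Finset.univ.filter (fun i : Fin (q * (q + 1)) => q ^ 2 - 1 ≤ (i : ℕ)),
            (LinearMap.proj i : (Fin (q * (q + 1)) → ℂ) →ₗ[ℂ] ℂ))) = q ^ 2 + q - 1) ∧
    -- every vector of the family lies in `H`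
    (∀ j : Fin (q ^ 2), (j : ℕ) < q * (q - 1) / 2 → ∀ l : Fin (q + 2),
        (∑ i ∈ Finset.univ.filter (fun i : Fin (q * (q + 1)) => q ^ 2 - 1 ≤ (i : ℕ)),
          (E j *ᵥ s l) i) = 0) ∧
    (∀ j : Fin (q ^ 2), q * (q - 1) / 2 ≤ (j : ℕ) → ∀ l : Fin q,
        (∑ i ∈ Finset.univ.filter (fun i : Fin (q * (q + 1)) => q ^ 2 - 1 ≤ (i : ℕ)),
          (E j *ᵥ c l) i) = 0) ∧
    -- every vector of the family has squared norm `q + 1`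
    (∀ (j : Fin (q ^ 2)) (l : Fin (q + 2)), (j : ℕ) < q * (q - 1) / 2 →
        star (E j *ᵥ s l) ⬝ᵥ (E j *ᵥ s l) = (q : ℂ) + 1) ∧
    (∀ (j : Fin (q ^ 2)) (l : Fin q), q * (q - 1) / 2 ≤ (j : ℕ) →
        star (E j *ᵥ c l) ⬝ᵥ (E j *ᵥ c l) = (q : ℂ) + 1) ∧
    -- any two distinct vectors of the family have inner product of modulus `1`
    (∀ (j j' : Fin (q ^ 2)) (l l' : Fin (q + 2)),
        (j : ℕ) < q * (q - 1) / 2 → (j' : ℕ) < q * (q - 1) / 2 → (j, l) ≠ (j', l') →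
        ‖star (E j *ᵥ s l) ⬝ᵥ (E j' *ᵥ s l')‖ = 1) ∧
    (∀ (j j' : Fin (q ^ 2)) (l : Fin (q + 2)) (l' : Fin q),
        (j : ℕ) < q * (q - 1) / 2 → q * (q - 1) / 2 ≤ (j' : ℕ) →
        ‖star (E j *ᵥ s l) ⬝ᵥ (E j' *ᵥ c l')‖ = 1) ∧
    (∀ (j j' : Fin (q ^ 2)) (l l' : Fin q),
        q * (q - 1) / 2 ≤ (j : ℕ) → q * (q - 1) / 2 ≤ (j' : ℕ) → (j, l) ≠ (j', l') →
        ‖star (E j *ᵥ c l) ⬝ᵥ (E j' *ᵥ c l')‖ = 1) ∧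
    -- the sum of the rank-one outer products is `q(q+1)` times the orthogonal
    -- projection onto `H`
    ((∑ j ∈ Finset.univ.filter (fun j : Fin (q ^ 2) => (j : ℕ) < q * (q - 1) / 2),
        ∑ l : Fin (q + 2), vecMulVec (E j *ᵥ s l) (star (E j *ᵥ s l))) +
      (∑ j ∈ Finset.univ.filter (fun j : Fin (q ^ 2) => q * (q - 1) / 2 ≤ (j : ℕ)),
        ∑ l : Fin q, vecMulVec (E j *ᵥ c l) (star (E j *ᵥ c l)))
      = ((q : ℂ) * ((q : ℂ) + 1)) •
        ((1 : Matrix (Fin (q * (q + 1))) (Fin (q * (q + 1))) ℂ) -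
          ((q : ℂ) + 1)⁻¹ •
            vecMulVec (fun i : Fin (q * (q + 1)) => if q ^ 2 - 1 ≤ (i : ℕ) then 1 else 0)
              (fun i : Fin (q * (q + 1)) => if q ^ 2 - 1 ≤ (i : ℕ) then 1 else 0))) := by
  classical
  have hconjZ : ∀ i j, conj (Z i j) = Z i j := by
    intro i j; rcases hZ01 i j with h | h <;> simp [h]
  have hconjE : ∀ j i l, conj (E j i l) = E j i l := by
    intro j i l; rcases hE01 j i l with h | h <;> simp [h]
  have F1 : ∀ j, ∑ i, Z i j = (q : ℂ) + 1 := by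
    intro j
    have h := congrFun (congrFun hZgram j) j
    simp [Matrix.mul_apply, Matrix.one_apply] at h
    rw [← h]
    refine Finset.sum_congr rfl fun i _ => ?_
    rcases hZ01 i j with h' | h' <;> simp [h']
  have F2 : ∀ j j', j ≠ j' → ∑ i, Z i j * Z i j' = 1 := by
    intro j j' hne
    have h := congrFun (congrFun hZgram j) j'
    simpa [Matrix.mul_apply, Matrix.one_apply, hne] using h
  have F3 : ∀ i, ∑ j, Z i j = (q : ℂ) := by
    intro i
    have h := congrFun hZrow i
    simpa [Matrix.mulVec, dotProduct] using h
  have F4 : ∀ j i, ∑ l, E j i l = Z i j := by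
    intro j i
    have h := hEcol j i
    simpa [Matrix.mulVec, dotProduct] using h
  have F5 : ∀ j l, ∑ i, E j i l = 1 := by
    intro j l
    have h := congrFun (congrFun (hEiso j) l) l
    simp [Matrix.mul_apply, Matrix.one_apply] at h
    rw [← h]
    refine Finset.sum_congr rfl fun i _ => ?_
    rcases hE01 j i l with h' | h' <;> simp [h']
  have F6 : ∀ j (l l' : Fin (q + 1)), l ≠ l' → ∑ i, E j i l * E j i l' = 0 := by
    intro j l l' hne
    have h := congrFun (congrFun (hEiso j) l) l'
    simpa [Matrix.mul_apply, Matrix.one_apply, hne] using h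
  have F6' : ∀ j (l l' : Fin (q + 1)), l ≠ l' → ∀ i, E j i l * E j i l' = 0 := by
    intro j l l' hne i
    refine etf_boole_sum_eq_zero (f := fun i => E j i l * E j i l')
      (t := Finset.univ) ?_ (F6 j l l' hne) i (Finset.mem_univ i)
    intro i _
    rcases hE01 j i l with h | h <;> rcases hE01 j i l' with h' | h' <;> simp [h, h']
  have F7 : ∀ j l, (Finset.univ.filter (fun i : Fin (q * (q + 1)) => E j i l = 1)).card = 1 := by
    intro j l
    have h := F5 j l
    rw [etf_boole_sum (fun i _ => hE01 j i l)] at h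
    exact_mod_cast h
  have hinner : ∀ (j j' : Fin (q ^ 2)) (x y : Fin (q + 1) → ℂ),
      star (E j *ᵥ x) ⬝ᵥ (E j' *ᵥ y)
        = ∑ m, ∑ m', (∑ i, E j i m * E j' i m') * (conj (x m) * y m') := by
    intro j j' x y
    have lhs : star (E j *ᵥ x) ⬝ᵥ (E j' *ᵥ y)
        = ∑ i, (∑ m, E j i m * conj (x m)) * (∑ m', E j' i m' * y m') := by
      simp only [dotProduct, Pi.star_apply, Matrix.mulVec, dotProduct, Complex.star_def,
        map_sum, _root_.map_mul, hconjE]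
    rw [lhs]
    calc ∑ i, (∑ m, E j i m * conj (x m)) * (∑ m', E j' i m' * y m')
        = ∑ i, ∑ m, ∑ m', (E j i m * conj (x m)) * (E j' i m' * y m') := by
          exact Finset.sum_congr rfl fun i _ => Finset.sum_mul_sum _ _ _ _
      _ = ∑ m, ∑ i, ∑ m', (E j i m * conj (x m)) * (E j' i m' * y m') := Finset.sum_comm
      _ = ∑ m, ∑ m', ∑ i, (E j i m * conj (x m)) * (E j' i m' * y m') :=
          Finset.sum_congr rfl fun m _ => Finset.sum_comm
      _ = ∑ m, ∑ m', (∑ i, E j i m * E j' i m') * (conj (x m) * y m') := by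
          refine Finset.sum_congr rfl fun m _ => Finset.sum_congr rfl fun m' _ => ?_
          rw [Finset.sum_mul]
          exact Finset.sum_congr rfl fun i _ => by ring
  have hinner_same : ∀ (j : Fin (q ^ 2)) (x y : Fin (q + 1) → ℂ),
      star (E j *ᵥ x) ⬝ᵥ (E j *ᵥ y) = ∑ m, conj (x m) * y m := by
    intro j x y
    rw [hinner]
    have key : ∀ m m' : Fin (q + 1), (∑ i, E j i m * E j i m') = if m = m' then 1 else 0 := by
      intro m m'
      by_cases h : m = m'
      · subst h
        simp only [if_pos rfl]
        rw [← F5 j m]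
        refine Finset.sum_congr rfl fun i _ => ?_
        rcases hE01 j i m with h' | h' <;> simp [h']
      · simp only [if_neg h]
        exact F6 j m m' h
    refine Finset.sum_congr rfl fun m _ => ?_
    simp only [key, ite_mul, one_mul, zero_mul, Finset.sum_ite_eq, Finset.mem_univ, if_true]
  have FG01 : ∀ (j j' : Fin (q ^ 2)) (m m' : Fin (q + 1)),
      (∑ i, E j i m * E j' i m') = 0 ∨ (∑ i, E j i m * E j' i m') = 1 := by
    intro j j' m m'
    have h01 : ∀ i ∈ (Finset.univ : Finset (Fin (q * (q + 1)))),
        E j i m * E j' i m' = 0 ∨ E j i m * E j' i m' = 1 := by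
      intro i _
      rcases hE01 j i m with h | h <;> rcases hE01 j' i m' with h' | h' <;> simp [h, h']
    rw [etf_boole_sum h01]
    have hsub : (Finset.univ.filter (fun i => E j i m * E j' i m' = 1))
        ⊆ (Finset.univ.filter (fun i => E j i m = 1)) := by
      intro i hi
      simp only [Finset.mem_filter, Finset.mem_univ, true_and] at hi ⊢
      rcases hE01 j i m with h | h
      · rw [h, zero_mul] at hi; exact absurd hi (by norm_num)
      · exact h
    have hcard := (Finset.card_le_card hsub).trans_eq (F7 j m)
    interval_cases h : (Finset.univ.filter (fun i => E j i m * E j' i m' = 1)).card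
    · left; norm_num
    · right; norm_num
  have FGsum : ∀ (j j' : Fin (q ^ 2)), j ≠ j' →
      ∑ p : Fin (q + 1) × Fin (q + 1), (∑ i, E j i p.1 * E j' i p.2) = 1 := by
    intro j j' hne
    rw [Fintype.sum_prod_type]
    calc ∑ m, ∑ m', ∑ i, E j i m * E j' i m'
        = ∑ m, ∑ i, ∑ m', E j i m * E j' i m' :=
          Finset.sum_congr rfl fun m _ => Finset.sum_comm
      _ = ∑ i, ∑ m, ∑ m', E j i m * E j' i m' := Finset.sum_comm
      _ = ∑ i, Z i j * Z i j' := by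
          refine Finset.sum_congr rfl fun i _ => ?_
          rw [← F4 j i, ← F4 j' i, Finset.sum_mul_sum]
      _ = 1 := F2 j j' hne
  have habs_distinct : ∀ (j j' : Fin (q ^ 2)) (x y : Fin (q + 1) → ℂ), j ≠ j' →
      (∀ m, ‖x m‖ = 1) → (∀ m, ‖y m‖ = 1) →
      ‖star (E j *ᵥ x) ⬝ᵥ (E j' *ᵥ y)‖ = 1 := by
    intro j j' x y hne hx hy
    obtain ⟨p0, -, hp1, hp0⟩ := etf_boole_sum_eq_one
      (f := fun p : Fin (q + 1) × Fin (q + 1) => ∑ i, E j i p.1 * E j' i p.2)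
      (fun p _ => FG01 j j' p.1 p.2) (FGsum j j' hne)
    rw [hinner]
    have : ∑ m, ∑ m', (∑ i, E j i m * E j' i m') * (conj (x m) * y m')
        = conj (x p0.1) * y p0.2 := by
      rw [← Finset.sum_product' (s := Finset.univ) (t := Finset.univ),
        Finset.univ_product_univ]
      rw [Finset.sum_eq_single p0]
      · rw [hp1, one_mul]
      · intro p _ hps; rw [hp0 p (Finset.mem_univ p) hps, zero_mul]
      · intro h; exact absurd (Finset.mem_univ p0) h
    rw [this, norm_mul, Complex.norm_conj, hx, hy, one_mul]
  have hdot : ∀ (x y : Fin (q + 1) → ℂ), star x ⬝ᵥ y = ∑ m, conj (x m) * y m := fun x y => rfl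
  have Sfact := etf_simplex_gram q hq s hs_unimod hs_ang
  have Cfact := etf_cosimplex_gram q hq c hc_unimod hc_sum hc_ang
  have hhalf := etf_halves q hq Z hZ01 hZblock F1 F2
  have hmn := etf_memb_norm q hq Z hZblock E hE01 hEblock F4 F5 s c hc_sum hinner_same
  refine ⟨etf_dim q hq, hmn.1, hmn.2.1, ?_, ?_, ?_, ?_, ?_, ?_⟩
  · intro j l _
    exact hmn.2.2 j (s l) (hs_unimod l)
  · intro j l _
    exact hmn.2.2 j (c l) (hc_unimod l)
  · intro j j' l l' hj hj' hne
    by_cases hjj : j = j'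
    · subst hjj
      have hll : l ≠ l' := fun h => hne (by rw [h])
      rw [hinner_same]
      have := hs_ang l l' hll
      rwa [hdot] at this
    · exact habs_distinct j j' (s l) (s l') hjj (hs_unimod l) (hs_unimod l')
  · intro j j' l l' hj hj'
    have hjj : j ≠ j' := by
      intro h
      rw [h] at hj
      omega
    exact habs_distinct j j' (s l) (c l') hjj (hs_unimod l) (hc_unimod l')
  · intro j j' l l' hj hj' hne
    by_cases hjj : j = j'
    · subst hjj
      have hll : l ≠ l' := fun h => hne (by rw [h])
      rw [hinner_same]
      have := hc_ang l l' hll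
      rwa [hdot] at this
    · exact habs_distinct j j' (c l) (c l') hjj (hc_unimod l) (hc_unimod l')
  · exact etf_final q hq Z hZ01 hZblock E hE01 hconjE hEblock F2 F3 F4 F5 F6' F7 s c
      hhalf Sfact Cfact
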